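/- Let G be a directed graph with n vertices in which every vertex u satisfies max(outdeg(u), indeg(u)) ≤ 2 and outdeg(u) + indeg(u) ≤ 3, fix a vertex x of G, and let G' be the graph of the directed trail construction. Then G has a directed Hamiltonian cycle if and only if G' admits n + 1 s-t trails sharing no arc. -/

import Mathlib

namespace PaperRCA

/-- A walk in a directed graph with arc relation `A`: a nonempty list of vertices
in which each consecutive pair is an arc. -/
def IsDiWalk {V : Type*} (A : V → V → Prop) (w : List V) : Prop :=
  w ≠ [] ∧ w.Chain' A

/-- The list of arcs of a walk. -/
def walkArcs {V : Type*} (w : List V) : List (V × V) := w.zip w.tail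

/-- An arc `a` is shared by the family of walks `W` if it occurs at the same
position in two distinct walks of the family. -/
def SharedArc {V : Type*} {p : ℕ} (W : Fin p → List V) (a : V × V) : Prop :=
  ∃ i j : Fin p, i ≠ j ∧ ∃ r : ℕ,
    (walkArcs (W i))[r]? = some a ∧ (walkArcs (W j))[r]? = some a

/-- A directed Hamiltonian cycle in a digraph on `Fin n` with arc relation `A`:
a closed walk on `n + 1` vertices (first = last) visiting every vertex exactly
once. -/
def HasDiHamCycle {n : ℕ} (A : Fin n → Fin n → Prop) : Prop :=
  ∃ l : List (Fin n), l.Chain' A ∧ l.head? = l.getLast? ∧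
    l.length = n + 1 ∧ l.tail.Nodup

/-- Vertices of the directed trail construction for a digraph `G` on `n` vertices:
a copy of the original vertices, new vertices `s, t, v, w`, and the internal
vertices `ch c r` of the `n` directed chains from `s` to `w` of lengths
`3, 4, …, n+2` (chain `c : Fin n` has length `c + 3`, hence `c + 2` internal
vertices). -/
inductive DTV (n : ℕ) where
  | orig (x : Fin n) : DTV n
  | s : DTV n
  | t : DTV n
  | v : DTV n
  | w : DTV n
  | ch (c : Fin n) (r : Fin ((c : ℕ) + 2)) : DTV n

/-- Arc relation of the directed trail construction; `x₀` is the chosen vertex of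
`G`. -/
def DTArc {n : ℕ} (A : Fin n → Fin n → Prop) (x₀ : Fin n) :
    DTV n → DTV n → Prop
  | .orig a, .orig b => A a b
  | .s, .v => True
  | .v, .orig a => a = x₀
  | .orig a, .w => a = x₀
  | .w, .t => True
  | .s, .ch _ r => (r : ℕ) = 0
  | .ch c r, .ch c' r' => (c : ℕ) = (c' : ℕ) ∧ (r' : ℕ) = (r : ℕ) + 1
  | .ch c r, .w => (r : ℕ) + 1 = (c : ℕ) + 2
  | _, _ => False

section Generic
variable {V : Type*}

lemma walkArcs_length (l : List V) : (walkArcs l).length = l.length - 1 := by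
  simp [walkArcs, List.length_zip, List.length_tail]

lemma walkArcs_getElem? {l : List V} {r : ℕ} {a b : V} :
    (walkArcs l)[r]? = some (a, b) ↔ l[r]? = some a ∧ l[r+1]? = some b := by
  rw [walkArcs, List.getElem?_zip_eq_some]
  simp [List.getElem?_tail]

lemma chain'_iff_getElem? {R : V → V → Prop} {l : List V} :
    l.Chain' R ↔ ∀ (r : ℕ) (a b : V), l[r]? = some a → l[r+1]? = some b → R a b := by
  rw [show l.Chain' R ↔ List.IsChain R l from Iff.rfl, List.isChain_iff_getElem]
  constructor
  · intro h r a b ha hb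
    obtain ⟨hb', rfl⟩ := List.getElem?_eq_some_iff.1 hb
    obtain ⟨ha', rfl⟩ := List.getElem?_eq_some_iff.1 ha
    simpa using h r (by omega)
  · intro h i hi
    have := h i (l.get ⟨i, by omega⟩) (l.get ⟨i+1, by omega⟩)
      (List.getElem?_eq_some_iff.2 ⟨by omega, by simp⟩)
      (List.getElem?_eq_some_iff.2 ⟨by omega, by simp⟩)
    simpa using this

end Generic

def chainF (n : ℕ) (c : Fin n) : ℕ → DTV n := fun k =>
  if h : 1 ≤ k ∧ k ≤ (c : ℕ) + 2 then .ch c ⟨k - 1, by omega⟩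
  else if k = 0 then .s else if k = (c : ℕ) + 3 then .w else .t

def mainF (n : ℕ) (g : ℕ → Fin n) : ℕ → DTV n := fun k =>
  if k = 0 then .s else if k = 1 then .v
  else if k ≤ n + 2 then .orig (g (k - 2))
  else if k = n + 3 then .w else .t

def chainT (n : ℕ) (c : Fin n) : List (DTV n) :=
  List.ofFn (fun k : Fin ((c : ℕ) + 5) => chainF n c k)

def mainT (n : ℕ) (g : ℕ → Fin n) : List (DTV n) :=
  List.ofFn (fun k : Fin (n + 5) => mainF n g k)

lemma chainT_getElem? (n : ℕ) (c : Fin n) (k : ℕ) :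
    (chainT n c)[k]? = if k < (c : ℕ) + 5 then some (chainF n c k) else none := by
  rw [chainT, List.getElem?_ofFn]
  split <;> rfl

lemma mainT_getElem? (n : ℕ) (g : ℕ → Fin n) (k : ℕ) :
    (mainT n g)[k]? = if k < n + 5 then some (mainF n g k) else none := by
  rw [mainT, List.getElem?_ofFn]
  split <;> rfl

lemma chainT_length (n : ℕ) (c : Fin n) : (chainT n c).length = (c : ℕ) + 5 := by
  simp [chainT]

lemma mainT_length (n : ℕ) (g : ℕ → Fin n) : (mainT n g).length = n + 5 := by
  simp [mainT]

lemma chainF_inj (n : ℕ) (c : Fin n) {k k' : ℕ} (hk : k < (c:ℕ)+5) (hk' : k' < (c:ℕ)+5)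
    (h : chainF n c k = chainF n c k') : k = k' := by
  unfold chainF at h
  split_ifs at h <;> simp_all <;> omega

section Fwd
variable {n : ℕ} (A : Fin n → Fin n → Prop) (x₀ : Fin n)

lemma chainT_chain' (c : Fin n) : (chainT n c).Chain' (DTArc A x₀) := by
  rw [chain'_iff_getElem?]
  intro r a b ha hb
  rw [chainT_getElem?] at ha hb
  split_ifs at ha hb with h1 h2
  obtain rfl := Option.some_injective _ ha
  obtain rfl := Option.some_injective _ hb
  unfold chainF
  rcases Nat.lt_or_ge r 1 with hr | hr
  · interval_cases r
    rw [dif_neg (by omega), if_pos rfl, dif_pos ⟨by omega, by omega⟩]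
    show (1:ℕ) - 1 = 0
    rfl
  · rcases Nat.lt_or_ge r ((c:ℕ)+2) with hr2 | hr2
    · rw [dif_pos ⟨hr, by omega⟩, dif_pos ⟨by omega, by omega⟩]
      exact ⟨rfl, show r + 1 - 1 = r - 1 + 1 by omega⟩
    · rcases Nat.eq_or_lt_of_le hr2 with hr3 | hr3
      · rw [dif_pos ⟨hr, by omega⟩, dif_neg (by omega), if_neg (by omega), if_pos (by omega)]
        show r - 1 + 1 = (c : ℕ) + 2
        omega
      · have hrc : r = (c:ℕ) + 3 := by omega
        rw [dif_neg (by omega), if_neg (by omega), if_pos hrc,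
          dif_neg (by omega), if_neg (by omega), if_neg (by omega)]
        trivial

lemma chainT_head? (c : Fin n) : (chainT n c).head? = some DTV.s := by
  rw [List.head?_eq_getElem?, chainT_getElem?, if_pos (by omega)]
  unfold chainF
  rw [dif_neg (by omega), if_pos rfl]

lemma chainT_getLast? (c : Fin n) : (chainT n c).getLast? = some DTV.t := by
  rw [List.getLast?_eq_getElem?, chainT_length, chainT_getElem?]
  rw [if_pos (by omega)]
  unfold chainF
  rw [dif_neg (by omega), if_neg (by omega), if_neg (by omega)]

lemma chainT_arcs_nodup (c : Fin n) : (walkArcs (chainT n c)).Nodup := by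
  rw [List.nodup_iff_getElem?_ne_getElem?]
  intro i j hij hj h
  rw [walkArcs_length, chainT_length] at hj
  have hlen : i < (walkArcs (chainT n c)).length := by
    rw [walkArcs_length, chainT_length]; omega
  obtain ⟨⟨a, b⟩, hab⟩ : ∃ x, (walkArcs (chainT n c))[i]? = some x :=
    ⟨_, List.getElem?_eq_getElem hlen⟩
  rw [hab] at h
  have h1 := walkArcs_getElem?.1 hab
  have h2 := walkArcs_getElem?.1 h.symm
  have a1 : (chainT n c)[i]? = some a := h1.1
  have a2 : (chainT n c)[j]? = some a := h2.1
  rw [chainT_getElem?, if_pos (show i < (c:ℕ)+5 by omega)] at a1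
  rw [chainT_getElem?, if_pos (show j < (c:ℕ)+5 by omega)] at a2
  have e1 : chainF n c i = chainF n c j :=
    Option.some_injective _ (a1.trans a2.symm)
  exact absurd (chainF_inj n c (by omega) (by omega) e1) (by omega)

lemma mainT_chain' (hn : 0 < n) (g : ℕ → Fin n) (g0 : g 0 = x₀) (gn : g n = x₀)
    (garc : ∀ k, k < n → A (g k) (g (k+1))) :
    (mainT n g).Chain' (DTArc A x₀) := by
  rw [chain'_iff_getElem?]
  intro r a b ha hb
  rw [mainT_getElem?] at ha hb
  split_ifs at ha hb with h1 h2
  obtain rfl := Option.some_injective _ ha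
  obtain rfl := Option.some_injective _ hb
  unfold mainF
  rcases Nat.lt_or_ge r 2 with hr | hr
  · interval_cases r
    · rw [if_pos rfl, if_neg (by omega), if_pos rfl]
      trivial
    · rw [if_neg (by omega), if_pos rfl, if_neg (by omega), if_neg (by omega),
        if_pos (by omega)]
      show g (2 - 2) = x₀
      exact g0
  · rcases Nat.lt_or_ge r (n + 2) with hr2 | hr2
    · rw [if_neg (by omega), if_neg (by omega), if_pos (by omega),
        if_neg (by omega), if_neg (by omega), if_pos (by omega)]
      show A (g (r - 2)) (g (r + 1 - 2))
      have e : r + 1 - 2 = (r - 2) + 1 := by omega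
      rw [e]
      exact garc _ (by omega)
    · rcases Nat.eq_or_lt_of_le hr2 with hr3 | hr3
      · rw [if_neg (by omega), if_neg (by omega), if_pos (by omega),
          if_neg (by omega), if_neg (by omega), if_neg (by omega), if_pos (by omega)]
        show g (r - 2) = x₀
        have e : r - 2 = n := by omega
        rw [e]
        exact gn
      · have hr4 : r = n + 3 := by omega
        rw [if_neg (by omega), if_neg (by omega), if_neg (by omega), if_pos hr4,
          if_neg (by omega), if_neg (by omega), if_neg (by omega), if_neg (by omega)]
        trivial

lemma mainT_head? (g : ℕ → Fin n) : (mainT n g).head? = some DTV.s := by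
  rw [List.head?_eq_getElem?, mainT_getElem?, if_pos (by omega)]
  unfold mainF
  rw [if_pos rfl]

lemma mainT_getLast? (g : ℕ → Fin n) : (mainT n g).getLast? = some DTV.t := by
  rw [List.getLast?_eq_getElem?, mainT_length, mainT_getElem?, if_pos (by omega)]
  unfold mainF
  rw [if_neg (by omega), if_neg (by omega), if_neg (by omega), if_neg (by omega)]

lemma mainF_eq_cases (g : ℕ → Fin n)
    (gdup : ∀ i j, i < j → j ≤ n → g i = g j → i = 0 ∧ j = n)
    {i j : ℕ} (hij : i < j) (hj : j ≤ n + 3)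
    (e1 : mainF n g i = mainF n g j) : i = 2 ∧ j = n + 2 := by
  unfold mainF at e1
  split_ifs at e1
  all_goals try omega
  all_goals try exact DTV.noConfusion e1
  simp only [DTV.orig.injEq] at e1
  have := gdup (i-2) (j-2) (by omega) (by omega) e1
  omega

lemma mainT_arcs_nodup (hn : 0 < n) (g : ℕ → Fin n)
    (gdup : ∀ i j, i < j → j ≤ n → g i = g j → i = 0 ∧ j = n) :
    (walkArcs (mainT n g)).Nodup := by
  rw [List.nodup_iff_getElem?_ne_getElem?]
  intro i j hij hj h
  rw [walkArcs_length, mainT_length] at hj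
  obtain ⟨⟨a, b⟩, hab⟩ : ∃ x, (walkArcs (mainT n g))[i]? = some x :=
    ⟨_, List.getElem?_eq_getElem (by rw [walkArcs_length, mainT_length]; omega)⟩
  rw [hab] at h
  have h1 := walkArcs_getElem?.1 hab
  have h2 := walkArcs_getElem?.1 h.symm
  have a1 : (mainT n g)[i]? = some a := h1.1
  have a2 : (mainT n g)[j]? = some a := h2.1
  have b1 : (mainT n g)[i+1]? = some b := h1.2
  have b2 : (mainT n g)[j+1]? = some b := h2.2
  rw [mainT_getElem?, if_pos (show i < n+5 by omega)] at a1
  rw [mainT_getElem?, if_pos (show j < n+5 by omega)] at a2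
  rw [mainT_getElem?, if_pos (show i+1 < n+5 by omega)] at b1
  rw [mainT_getElem?, if_pos (show j+1 < n+5 by omega)] at b2
  have e1 : mainF n g i = mainF n g j :=
    Option.some_injective _ (a1.trans a2.symm)
  have e2 : mainF n g (i+1) = mainF n g (j+1) :=
    Option.some_injective _ (b1.trans b2.symm)
  obtain ⟨rfl, rfl⟩ := mainF_eq_cases g gdup hij (by omega) e1
  unfold mainF at e2
  rw [if_neg (by omega), if_neg (by omega), if_pos (by omega),
    if_neg (by omega), if_neg (by omega), if_neg (by omega), if_pos (by omega)] at e2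
  exact absurd e2 (by simp)

lemma chainF_chainF {c c' : Fin n} (hcc : (c : ℕ) ≠ (c' : ℕ)) {r : ℕ}
    (hr : r + 1 < (c : ℕ) + 5) (hr' : r + 1 < (c' : ℕ) + 5)
    (e1 : chainF n c r = chainF n c' r) (e2 : chainF n c (r+1) = chainF n c' (r+1)) :
    False := by
  unfold chainF at e1
  split_ifs at e1
  all_goals try exact DTV.noConfusion e1
  all_goals try omega
  all_goals first
    | (simp only [DTV.ch.injEq] at e1
       exact hcc (by rw [e1.1]))
    | (unfold chainF at e2
       rw [dif_pos ⟨by omega, by omega⟩, dif_pos ⟨by omega, by omega⟩] at e2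
       simp only [DTV.ch.injEq] at e2
       exact hcc (by rw [e2.1]))

lemma chainF_mainF {c : Fin n} (g : ℕ → Fin n) {r : ℕ}
    (hr : r + 1 < (c : ℕ) + 5) (hrm : r + 1 < n + 5)
    (e1 : chainF n c r = mainF n g r) (e2 : chainF n c (r+1) = mainF n g (r+1)) :
    False := by
  have hcn := c.isLt
  unfold chainF mainF at e1
  split_ifs at e1
  all_goals try exact DTV.noConfusion e1
  all_goals try omega
  all_goals (unfold chainF mainF at e2; split_ifs at e2 <;>
    first | exact DTV.noConfusion e2 | omega)

lemma rotate (hn : 0 < n) (h : HasDiHamCycle A) :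
    ∃ l : List (Fin n), l.Chain' A ∧ l.head? = some x₀ ∧ l.getLast? = some x₀ ∧
      l.length = n + 1 ∧ l.tail.Nodup := by
  obtain ⟨l, hc, hht, hlen, hnd⟩ := h
  obtain ⟨hd, tl, rfl⟩ : ∃ hd tl, l = hd :: tl := by
    cases l with
    | nil => simp at hlen
    | cons a b => exact ⟨a, b, rfl⟩
  have hlast : (hd :: tl).getLast? = some hd := by rw [← hht]; rfl
  have htl_len : tl.length = n := by simpa using hlen
  have hnd' : tl.Nodup := hnd
  have hmem : x₀ ∈ tl := by
    have hcard : tl.toFinset = Finset.univ := by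
      apply Finset.eq_univ_of_card
      rw [List.toFinset_card_of_nodup hnd', htl_len, Fintype.card_fin]
    have : x₀ ∈ tl.toFinset := by rw [hcard]; exact Finset.mem_univ _
    simpa using this
  obtain ⟨a, b, rfl⟩ := List.append_of_mem hmem
  have J1 : ∀ y ∈ (a ++ x₀ :: b).head?, A hd y := (List.isChain_cons.1 hc).1
  have C0 : (a ++ x₀ :: b).Chain' A := (List.isChain_cons.1 hc).2
  have C1 : a.Chain' A := (List.isChain_append.1 C0).1
  have C2 : (x₀ :: b).Chain' A := (List.isChain_append.1 C0).2.1
  have J2 : ∀ x ∈ a.getLast?, ∀ y ∈ (x₀ :: b).head?, A x y :=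
    (List.isChain_append.1 C0).2.2
  have glast : (x₀ :: b).getLast? = some hd := by
    have e : hd :: (a ++ x₀ :: b) = (hd :: a) ++ (x₀ :: b) := by simp
    obtain ⟨z, hz⟩ : ∃ z, (x₀ :: b).getLast? = some z := by
      cases hq : (x₀ :: b).getLast? with
      | none => exact absurd (List.getLast?_eq_none_iff.1 hq) (by simp)
      | some z => exact ⟨z, rfl⟩
    rw [e, List.getLast?_append, hz] at hlast
    rw [Option.or] at hlast
    rw [hz, hlast]
  refine ⟨(x₀ :: b) ++ (a ++ [x₀]), ?_, ?_, ?_, ?_, ?_⟩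
  · refine List.isChain_append.2 ?_
    refine ⟨C2, ?_, ?_⟩
    · rw [List.isChain_append]
      refine ⟨C1, List.isChain_singleton _, ?_⟩
      intro x hx y hy
      simp only [List.head?_cons, Option.mem_def, Option.some.injEq] at hy
      subst hy
      exact J2 x hx x₀ (by simp)
    · intro x hx y hy
      rw [glast] at hx
      simp only [Option.mem_def, Option.some.injEq] at hx
      subst hx
      cases a with
      | nil =>
        simp only [List.nil_append, List.head?_cons, Option.mem_def,
          Option.some.injEq] at hy
        subst hy
        exact J1 x₀ (by simp)
      | cons a0 a' =>
        simp only [List.cons_append, List.head?_cons, Option.mem_def,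
          Option.some.injEq] at hy
        subst hy
        exact J1 a0 (by simp)
  · simp
  · have e : (x₀ :: b) ++ (a ++ [x₀]) = ((x₀ :: b) ++ a) ++ [x₀] := by
      rw [List.append_assoc]
    rw [e, List.getLast?_concat]
  · have h1 : (a ++ x₀ :: b).length = n := htl_len
    simp only [List.length_append, List.length_cons, List.length_nil] at h1 ⊢
    omega
  · show (b ++ (a ++ [x₀])).Nodup
    have hperm : (b ++ (a ++ [x₀])).Perm (a ++ x₀ :: b) := by
      have e : (a ++ [x₀]) ++ b = a ++ x₀ :: b := by simp
      exact (List.perm_append_comm).trans (by rw [e])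
    exact hperm.symm.nodup hnd'

lemma forward (hn : 0 < n) (hH : HasDiHamCycle A) :
    ∃ W : Fin (n + 1) → List (DTV n),
      (∀ i : Fin (n + 1), IsDiWalk (DTArc A x₀) (W i) ∧
        (walkArcs (W i)).Nodup ∧
        (W i).head? = some DTV.s ∧ (W i).getLast? = some DTV.t) ∧
      ∀ a : DTV n × DTV n, ¬ SharedArc W a := by
  obtain ⟨l, hc, hh, hgl, hlen, hnd⟩ := rotate A x₀ hn hH
  set g : ℕ → Fin n := fun k => (l[k]?).getD x₀ with hg
  have gval : ∀ k, k ≤ n → l[k]? = some (g k) := by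
    intro k hk
    have hk' : k < l.length := by omega
    rw [hg]
    simp [List.getElem?_eq_getElem hk']
  have g0 : g 0 = x₀ := by
    have h1 := gval 0 (by omega)
    rw [List.head?_eq_getElem?, h1] at hh
    exact (Option.some_injective _ hh)
  have gn : g n = x₀ := by
    have h1 := gval n (by omega)
    rw [List.getLast?_eq_getElem?, hlen] at hgl
    simp only [Nat.add_sub_cancel] at hgl
    rw [h1] at hgl
    exact (Option.some_injective _ hgl)
  have garc : ∀ k, k < n → A (g k) (g (k+1)) := by
    intro k hk
    exact chain'_iff_getElem?.1 hc k _ _ (gval k (by omega)) (gval (k+1) (by omega))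
  have gtne : ∀ i j, 1 ≤ i → i < j → j ≤ n → g i ≠ g j := by
    intro i j h1 h2 h3 he
    have := List.nodup_iff_getElem?_ne_getElem?.1 hnd (i-1) (j-1) (by omega)
      (by rw [List.length_tail, hlen]; omega)
    rw [List.getElem?_tail, List.getElem?_tail] at this
    have e1 : i - 1 + 1 = i := by omega
    have e2 : j - 1 + 1 = j := by omega
    rw [e1, e2, gval i (by omega), gval j (by omega)] at this
    exact this (by rw [he])
  have gdup : ∀ i j, i < j → j ≤ n → g i = g j → i = 0 ∧ j = n := by
    intro i j hij hj he
    rcases Nat.eq_zero_or_pos i with rfl | hi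
    · refine ⟨rfl, ?_⟩
      by_contra hjn
      exact gtne j n (by omega) (by omega) (by omega) (by rw [← he, g0, ← gn])
    · exact absurd he (gtne i j hi hij hj)
  refine ⟨fun i => if h : (i : ℕ) < n then chainT n ⟨i, h⟩ else mainT n g, ?_, ?_⟩
  · intro i
    by_cases h : (i : ℕ) < n
    · simp only [dif_pos h]
      exact ⟨⟨by intro e; have := chainT_length n ⟨i, h⟩; rw [e] at this; simp at this,
        chainT_chain' A x₀ _⟩, chainT_arcs_nodup _, chainT_head? _, chainT_getLast? _⟩
    · simp only [dif_neg h]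
      exact ⟨⟨by intro e; have := mainT_length n g; rw [e] at this; simp at this,
        mainT_chain' A x₀ hn g g0 gn garc⟩, mainT_arcs_nodup hn g gdup,
        mainT_head? g, mainT_getLast? g⟩
  · rintro ⟨u, v⟩ ⟨i, j, hij, r, hi, hj⟩
    have key : ∀ (L L' : List (DTV n)) (f f' : ℕ → DTV n) (m m' : ℕ),
        (∀ k, L[k]? = if k < m then some (f k) else none) →
        (∀ k, L'[k]? = if k < m' then some (f' k) else none) →
        (walkArcs L)[r]? = some (u, v) → (walkArcs L')[r]? = some (u, v) →
        (r + 1 < m ∧ r + 1 < m' ∧ f r = f' r ∧ f (r+1) = f' (r+1)) := by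
      intro L L' f f' m m' hL hL' hwa hwa'
      obtain ⟨p1, p2⟩ := walkArcs_getElem?.1 hwa
      obtain ⟨q1, q2⟩ := walkArcs_getElem?.1 hwa'
      rw [hL] at p1 p2
      rw [hL'] at q1 q2
      split_ifs at p1 p2 q1 q2 with h1 h2 h3 h4
      exact ⟨h2, h4, Option.some_injective _ (p1.trans q1.symm),
        Option.some_injective _ (p2.trans q2.symm)⟩
    by_cases hin : (i : ℕ) < n <;> by_cases hjn : (j : ℕ) < n
    · simp only [dif_pos hin] at hi
      simp only [dif_pos hjn] at hj
      obtain ⟨b1, b2, e1, e2⟩ := key _ _ _ _ _ _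
        (chainT_getElem? n ⟨i, hin⟩) (chainT_getElem? n ⟨j, hjn⟩) hi hj
      exact chainF_chainF (show ((⟨(i:ℕ), hin⟩ : Fin n) : ℕ) ≠ ((⟨(j:ℕ), hjn⟩ : Fin n) : ℕ) by
        simpa using fun hh => hij (Fin.ext hh)) b1 b2 e1 e2
    · simp only [dif_pos hin] at hi
      simp only [dif_neg hjn] at hj
      obtain ⟨b1, b2, e1, e2⟩ := key _ _ _ _ _ _
        (chainT_getElem? n ⟨i, hin⟩) (mainT_getElem? n g) hi hj
      exact chainF_mainF g b1 b2 e1 e2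
    · simp only [dif_neg hin] at hi
      simp only [dif_pos hjn] at hj
      obtain ⟨b1, b2, e1, e2⟩ := key _ _ _ _ _ _
        (chainT_getElem? n ⟨j, hjn⟩) (mainT_getElem? n g) hj hi
      exact chainF_mainF g b1 b2 e1 e2
    · exact hij (Fin.ext (by omega))

end Fwd

def unCh {n : ℕ} : DTV n → Fin (n + 1)
  | .ch c _ => c.castSucc
  | _ => Fin.last n

def unOrig {n : ℕ} (x₀ : Fin n) : DTV n → Fin n
  | .orig a => a
  | _ => x₀

section Bwd
variable {n : ℕ} {A : Fin n → Fin n → Prop} {x₀ : Fin n} {l : List (DTV n)}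

lemma bstep (hc : l.Chain' (DTArc A x₀)) (hl : l.getLast? = some DTV.t)
    {k : ℕ} {u : DTV n} (hu : l[k]? = some u) (hut : u ≠ DTV.t) :
    ∃ u', l[k+1]? = some u' ∧ DTArc A x₀ u u' := by
  have hk : k < l.length := (List.getElem?_eq_some_iff.1 hu).1
  have hne : k ≠ l.length - 1 := by
    intro e
    rw [List.getLast?_eq_getElem?, ← e, hu] at hl
    exact hut (Option.some_injective _ hl)
  have hk1 : k + 1 < l.length := by omega
  exact ⟨_, List.getElem?_eq_getElem hk1,
    chain'_iff_getElem?.1 hc k _ _ hu (List.getElem?_eq_getElem hk1)⟩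

lemma t_pos (hc : l.Chain' (DTArc A x₀)) {k : ℕ} (hu : l[k]? = some DTV.t) :
    k = l.length - 1 := by
  by_contra hne
  have hk : k < l.length := (List.getElem?_eq_some_iff.1 hu).1
  have hk1 : k + 1 < l.length := by omega
  obtain ⟨z, hz⟩ : ∃ z, l[k+1]? = some z := ⟨_, List.getElem?_eq_getElem hk1⟩
  have harc := chain'_iff_getElem?.1 hc k _ _ hu hz
  cases z <;> exact harc

lemma w_pos (hc : l.Chain' (DTArc A x₀)) (hl : l.getLast? = some DTV.t)
    {k : ℕ} (hu : l[k]? = some DTV.w) : k = l.length - 2 ∧ l[k+1]? = some DTV.t := by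
  obtain ⟨u', hu', harc⟩ := bstep hc hl hu (fun e => nomatch e)
  have hk : k < l.length := (List.getElem?_eq_some_iff.1 hu).1
  cases u' with
  | t =>
    have := t_pos hc hu'
    exact ⟨by omega, hu'⟩
  | orig a => exact False.elim harc
  | s => exact False.elim harc
  | v => exact False.elim harc
  | w => exact False.elim harc
  | ch c r => exact False.elim harc

lemma chainlen (hc : l.Chain' (DTArc A x₀)) (hl : l.getLast? = some DTV.t)
    {c : Fin n} (h1 : l[1]? = some (DTV.ch c ⟨0, by omega⟩)) :
    l.length = (c : ℕ) + 5 := by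
  have forced : ∀ k (hk : k ≤ (c:ℕ) + 1), l[k+1]? = some (DTV.ch c ⟨k, by omega⟩) := by
    intro k
    induction k with
    | zero => intro _; exact h1
    | succ m ih =>
      intro hm
      obtain ⟨u', hu', harc⟩ := bstep hc hl (ih (by omega)) (fun e => nomatch e)
      cases u' with
      | ch c' r' =>
        obtain ⟨e1, e2⟩ := harc
        obtain rfl : c = c' := Fin.ext e1
        have er : r' = ⟨m+1, by omega⟩ := Fin.ext e2
        rw [er] at hu'
        exact hu'
      | w =>
        have e : m + 1 = (c:ℕ) + 2 := harc
        omega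
      | orig a => exact False.elim harc
      | s => exact False.elim harc
      | t => exact False.elim harc
      | v => exact False.elim harc
  have hw : l[(c:ℕ)+3]? = some DTV.w := by
    obtain ⟨u', hu', harc⟩ := bstep hc hl (forced ((c:ℕ)+1) le_rfl) (fun e => nomatch e)
    have e : (c:ℕ) + 1 + 1 + 1 = (c:ℕ) + 3 := by omega
    cases u' with
    | ch c' r' =>
      obtain ⟨e1, e2⟩ := harc
      have e2' : (r' : ℕ) = (c:ℕ) + 1 + 1 := e2
      have e1' : (c:ℕ) = (c':ℕ) := e1
      have := r'.isLt
      omega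
    | w => rw [e] at hu'; exact hu'
    | orig a => exact False.elim harc
    | s => exact False.elim harc
    | t => exact False.elim harc
    | v => exact False.elim harc
  obtain ⟨hpos, _⟩ := w_pos hc hl hw
  have : (c:ℕ)+3 < l.length := (List.getElem?_eq_some_iff.1 hw).1
  omega

lemma mainstruct (hc : l.Chain' (DTArc A x₀)) (hl : l.getLast? = some DTV.t)
    (h1 : l[1]? = some DTV.v) :
    5 ≤ l.length ∧ l[2]? = some (DTV.orig x₀) ∧ l[l.length - 2]? = some DTV.w ∧
    (∀ k, 2 ≤ k → k ≤ l.length - 3 → ∃ a, l[k]? = some (DTV.orig a)) ∧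
    l[l.length - 3]? = some (DTV.orig x₀) := by
  have h2 : l[2]? = some (DTV.orig x₀) := by
    obtain ⟨u', hu', harc⟩ := bstep hc hl h1 (fun e => nomatch e)
    cases u' with
    | orig a =>
      have e : a = x₀ := harc
      rw [e] at hu'; exact hu'
    | s => exact False.elim harc
    | t => exact False.elim harc
    | v => exact False.elim harc
    | w => exact False.elim harc
    | ch c r => exact False.elim harc
  have hm2 : 2 < l.length := (List.getElem?_eq_some_iff.1 h2).1
  have hm1t : l[l.length - 1]? = some DTV.t := by
    rw [← List.getLast?_eq_getElem?]; exact hl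
  have hmw : l[l.length - 2]? = some DTV.w := by
    obtain ⟨z, hz⟩ : ∃ z, l[l.length - 2]? = some z :=
      ⟨_, List.getElem?_eq_getElem (by omega)⟩
    have e : l.length - 2 + 1 = l.length - 1 := by omega
    have harc := chain'_iff_getElem?.1 hc (l.length - 2) _ _ hz (by rw [e]; exact hm1t)
    cases z with
    | w => exact hz
    | orig a => exact False.elim harc
    | s => exact False.elim harc
    | t => exact False.elim harc
    | v => exact False.elim harc
    | ch c r => exact False.elim harc
  have hm5 : 5 ≤ l.length := by
    have e1 : 2 ≠ l.length - 1 := by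
      intro e
      rw [← e, h2] at hm1t
      simp at hm1t
    have e2 : 2 ≠ l.length - 2 := by
      intro e
      rw [← e, h2] at hmw
      simp at hmw
    omega
  have horig : ∀ k, 2 ≤ k → k ≤ l.length - 3 → ∃ a, l[k]? = some (DTV.orig a) := by
    intro k
    induction k with
    | zero => intro h _; omega
    | succ p ih =>
      intro h2k hk3
      rcases Nat.lt_or_ge p 2 with hp | hp
      · have e : p + 1 = 2 := by omega
        rw [e]; exact ⟨x₀, h2⟩
      · obtain ⟨a, ha⟩ := ih (by omega) (by omega)
        obtain ⟨u', hu', harc⟩ := bstep hc hl ha (fun e => nomatch e)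
        cases u' with
        | orig b => exact ⟨b, hu'⟩
        | w =>
          have := (w_pos hc hl hu').1
          omega
        | s => exact False.elim harc
        | t => exact False.elim harc
        | v => exact False.elim harc
        | ch c r => exact False.elim harc
  have hlastorig : l[l.length - 3]? = some (DTV.orig x₀) := by
    obtain ⟨a, ha⟩ := horig (l.length - 3) (by omega) le_rfl
    have e : l.length - 3 + 1 = l.length - 2 := by omega
    have harc := chain'_iff_getElem?.1 hc (l.length - 3) _ _ ha (by rw [e]; exact hmw)
    have e2 : a = x₀ := harc
    rw [e2] at ha; exact ha
  exact ⟨hm5, h2, hmw, horig, hlastorig⟩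

lemma two_le_ncard {α : Type*} {s : Set α} (hs : s.Finite) {a b : α}
    (ha : a ∈ s) (hb : b ∈ s) (hab : a ≠ b) : 2 ≤ s.ncard := by
  have := (Set.one_lt_ncard_iff hs).2 ⟨a, b, ha, hb, hab⟩
  omega

lemma pre_w (hc : l.Chain' (DTArc A x₀)) (hl : l.getLast? = some DTV.t)
    (hh : l[0]? = some DTV.s) : 2 ≤ l.length ∧ l[l.length - 2]? = some DTV.w := by
  have h0 : 0 < l.length := (List.getElem?_eq_some_iff.1 hh).1
  have hm1 : l[l.length - 1]? = some DTV.t := by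
    rw [← List.getLast?_eq_getElem?]; exact hl
  have hge2 : 2 ≤ l.length := by
    by_contra hcon
    have e : l.length - 1 = 0 := by omega
    rw [e, hh] at hm1
    simp at hm1
  obtain ⟨z, hz⟩ : ∃ z, l[l.length - 2]? = some z :=
    ⟨_, List.getElem?_eq_getElem (by omega)⟩
  have e : l.length - 2 + 1 = l.length - 1 := by omega
  have harc := chain'_iff_getElem?.1 hc (l.length - 2) _ _ hz (by rw [e]; exact hm1)
  cases z with
  | w => exact ⟨hge2, hz⟩
  | orig a => exact False.elim harc
  | s => exact False.elim harc
  | t => exact False.elim harc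
  | v => exact False.elim harc
  | ch c r => exact False.elim harc

end Bwd

/-- Let `G` be a digraph on `n` vertices in which every vertex `u`
satisfies `max(outdeg u, indeg u) ≤ 2` and `outdeg u + indeg u ≤ 3`, and fix a
vertex `x₀` of `G`. Then `G` has a directed Hamiltonian cycle iff the digraph `G'`
of the directed trail construction admits `n + 1` `s`-`t` trails sharing no arc. -/
theorem stmt10 (n : ℕ) (A : Fin n → Fin n → Prop)
    (hdeg : ∀ u : Fin n, {z : Fin n | A u z}.ncard ≤ 2 ∧
      {z : Fin n | A z u}.ncard ≤ 2 ∧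
      {z : Fin n | A u z}.ncard + {z : Fin n | A z u}.ncard ≤ 3)
    (x₀ : Fin n) :
    HasDiHamCycle A ↔
    (∃ W : Fin (n + 1) → List (DTV n),
      (∀ i : Fin (n + 1), IsDiWalk (DTArc A x₀) (W i) ∧
        (walkArcs (W i)).Nodup ∧
        (W i).head? = some DTV.s ∧ (W i).getLast? = some DTV.t) ∧
      ∀ a : DTV n × DTV n, ¬ SharedArc W a) := by
  rcases Nat.eq_zero_or_pos n with hn0 | hn
  · subst hn0; exact x₀.elim0
  constructor
  · exact forward A x₀ hn
  · rintro ⟨W, hW, hsh⟩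
    have hchain : ∀ i, (W i).Chain' (DTArc A x₀) := fun i => (hW i).1.2
    have hhead : ∀ i, (W i)[0]? = some DTV.s := fun i => by
      rw [← List.head?_eq_getElem?]; exact (hW i).2.2.1
    have hlastt : ∀ i, (W i).getLast? = some DTV.t := fun i => (hW i).2.2.2
    have hclass : ∀ i, (W i)[1]? = some DTV.v ∨
        ∃ c : Fin n, (W i)[1]? = some (DTV.ch c ⟨0, by omega⟩) := by
      intro i
      obtain ⟨u, hu, harc⟩ := bstep (hchain i) (hlastt i) (hhead i)
        (fun e => nomatch e)
      cases u with
      | v => exact Or.inl hu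
      | ch c r =>
        have e : (r : ℕ) = 0 := harc
        have er : r = ⟨0, by omega⟩ := Fin.ext e
        rw [er] at hu
        exact Or.inr ⟨c, hu⟩
      | orig a => exact False.elim harc
      | s => exact False.elim harc
      | t => exact False.elim harc
      | w => exact False.elim harc
    have hinj1 : ∀ i j, i ≠ j → ∀ u1, (W i)[1]? = some u1 → (W j)[1]? = some u1 → False := by
      intro i j hij u1 hi hj
      exact hsh (DTV.s, u1) ⟨i, j, hij, 0,
        walkArcs_getElem?.2 ⟨hhead i, hi⟩, walkArcs_getElem?.2 ⟨hhead j, hj⟩⟩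
    have hσs : Function.Surjective (fun i => unCh (((W i)[1]?).getD DTV.v)) := by
      rw [← Finite.injective_iff_surjective]
      intro i j he
      by_contra hij
      simp only at he
      rcases hclass i with hi | ⟨c, hi⟩ <;> rcases hclass j with hj | ⟨c', hj⟩
      · exact hinj1 i j hij _ hi hj
      · rw [hi, hj] at he
        simp only [Option.getD_some] at he
        exact absurd he.symm (Fin.ne_of_lt (Fin.castSucc_lt_last c'))
      · rw [hi, hj] at he
        simp only [Option.getD_some] at he
        exact absurd he (Fin.ne_of_lt (Fin.castSucc_lt_last c))
      · rw [hi, hj] at he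
        simp only [Option.getD_some] at he
        have hcc : c = c' := Fin.castSucc_injective n he
        subst hcc
        exact hinj1 i j hij _ hi hj
    obtain ⟨i₀, hi₀⟩ := hσs (Fin.last n)
    have hv : (W i₀)[1]? = some DTV.v := by
      rcases hclass i₀ with h | ⟨c, h⟩
      · exact h
      · exfalso
        simp only [h, Option.getD_some] at hi₀
        exact absurd hi₀ (Fin.ne_of_lt (Fin.castSucc_lt_last c))
    have hchains : ∀ c : Fin n, ∃ i, (W i)[1]? = some (DTV.ch c ⟨0, by omega⟩) := by
      intro c
      obtain ⟨i, hi⟩ := hσs c.castSucc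
      rcases hclass i with h | ⟨c', h⟩
      · exfalso
        simp only [h, Option.getD_some] at hi
        exact absurd hi.symm (Fin.ne_of_lt (Fin.castSucc_lt_last c))
      · simp only [h, Option.getD_some] at hi
        have hcc : c' = c := Fin.castSucc_injective n hi
        subst hcc
        exact ⟨i, h⟩
    choose ic hic using hchains
    have hlen_c : ∀ c : Fin n, (W (ic c)).length = (c : ℕ) + 5 :=
      fun c => chainlen (hchain _) (hlastt _) (hic c)
    have hicne : ∀ c, ic c ≠ i₀ := by
      intro c e
      have h := hic c
      rw [e, hv] at h
      simp at h
    have hwt : ∀ i, (walkArcs (W i))[(W i).length - 2]? = some (DTV.w, DTV.t) := by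
      intro i
      obtain ⟨h2, hw⟩ := pre_w (hchain i) (hlastt i) (hhead i)
      refine walkArcs_getElem?.2 ⟨hw, ?_⟩
      exact (w_pos (hchain i) (hlastt i) hw).2
    have hlen_inj : ∀ i j, i ≠ j → (W i).length ≠ (W j).length := by
      intro i j hij he
      exact hsh (DTV.w, DTV.t) ⟨i, j, hij, (W i).length - 2, hwt i,
        by rw [he]; exact hwt j⟩
    obtain ⟨hm5, h2orig, hmw, horig, hlastorig⟩ :=
      mainstruct (hchain i₀) (hlastt i₀) hv
    have hmn5 : n + 5 ≤ (W i₀).length := by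
      by_contra hlt
      have hc5 : (W i₀).length - 5 < n := by omega
      have hne := hlen_inj i₀ (ic ⟨(W i₀).length - 5, hc5⟩) (Ne.symm (hicne _))
      rw [hlen_c ⟨(W i₀).length - 5, hc5⟩] at hne
      exact hne (by simp only []; omega)
    set l := W i₀ with hldef
    set L : List (Fin n) := ((l.take (l.length - 2)).drop 2).map (unOrig x₀) with hLdef
    have hLlen : L.length = l.length - 4 := by
      rw [hLdef]
      simp only [List.length_map, List.length_drop, List.length_take]
      omega
    have hLk : ∀ k, k < l.length - 4 → L[k]? = (l[k+2]?).map (unOrig x₀) := by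
      intro k hk
      rw [hLdef, List.getElem?_map, List.getElem?_drop, List.getElem?_take,
        if_pos (by omega)]
      have e : 2 + k = k + 2 := by omega
      rw [e]
    have hLval : ∀ k, k ≤ l.length - 5 →
        ∃ a, l[k+2]? = some (DTV.orig a) ∧ L[k]? = some a := by
      intro k hk
      obtain ⟨a, ha⟩ := horig (k+2) (by omega) (by omega)
      exact ⟨a, ha, by rw [hLk k (by omega), ha]; rfl⟩
    have hL0 : L[0]? = some x₀ := by
      obtain ⟨a, ha, hb⟩ := hLval 0 (by omega)
      have e : a = x₀ := DTV.orig.inj (Option.some_injective _ (ha.symm.trans h2orig))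
      exact e ▸ hb
    have hLN : L[l.length - 5]? = some x₀ := by
      obtain ⟨a, ha, hb⟩ := hLval (l.length - 5) le_rfl
      have e : l.length - 5 + 2 = l.length - 3 := by omega
      rw [e] at ha
      have e2 : a = x₀ := DTV.orig.inj (Option.some_injective _ (ha.symm.trans hlastorig))
      exact e2 ▸ hb
    have hLchain : L.Chain' A := by
      rw [chain'_iff_getElem?]
      intro r a b ha hb
      have hr1 : r + 1 < l.length - 4 := by
        have := (List.getElem?_eq_some_iff.1 hb).1
        rw [hLlen] at this
        exact this
      obtain ⟨a', ha', ha''⟩ := hLval r (by omega)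
      obtain ⟨b', hb', hb''⟩ := hLval (r+1) (by omega)
      obtain rfl : a' = a := Option.some_injective _ (ha''.symm.trans ha)
      obtain rfl : b' = b := Option.some_injective _ (hb''.symm.trans hb)
      exact chain'_iff_getElem?.1 (hchain i₀) (r+2) (DTV.orig a') (DTV.orig b') ha'
        (by rw [(by omega : r+2+1 = r+1+2)]; exact hb')
    have hand : (walkArcs l).Nodup := (hW i₀).2.1
    have LarcNe : ∀ p q : ℕ, p ≠ q → p + 1 ≤ l.length - 5 → q + 1 ≤ l.length - 5 →
        ∀ a b : Fin n, L[p]? = some a → L[p+1]? = some b →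
        L[q]? = some a → L[q+1]? = some b → False := by
      intro p q hpq hp hq a b hpa hpb hqa hqb
      obtain ⟨a1, ha1, ha1'⟩ := hLval p (by omega)
      have ea1 : a1 = a := Option.some_injective _ (ha1'.symm.trans hpa)
      rw [ea1] at ha1
      obtain ⟨b1, hb1, hb1'⟩ := hLval (p+1) (by omega)
      have eb1 : b1 = b := Option.some_injective _ (hb1'.symm.trans hpb)
      rw [eb1] at hb1
      obtain ⟨a2, ha2, ha2'⟩ := hLval q (by omega)
      have ea2 : a2 = a := Option.some_injective _ (ha2'.symm.trans hqa)
      rw [ea2] at ha2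
      obtain ⟨b2, hb2, hb2'⟩ := hLval (q+1) (by omega)
      have eb2 : b2 = b := Option.some_injective _ (hb2'.symm.trans hqb)
      rw [eb2] at hb2
      have w1 : (walkArcs l)[p+2]? = some (DTV.orig a, DTV.orig b) :=
        walkArcs_getElem?.2 ⟨ha1,
          by rw [(by omega : p+2+1 = p+1+2)]; exact hb1⟩
      have w2 : (walkArcs l)[q+2]? = some (DTV.orig a, DTV.orig b) :=
        walkArcs_getElem?.2 ⟨ha2,
          by rw [(by omega : q+2+1 = q+1+2)]; exact hb2⟩
      rcases Nat.lt_or_ge p q with h | h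
      · exact List.nodup_iff_getElem?_ne_getElem?.1 hand (p+2) (q+2) (by omega)
          (by rw [walkArcs_length]; omega) (w1.trans w2.symm)
      · exact List.nodup_iff_getElem?_ne_getElem?.1 hand (q+2) (p+2) (by omega)
          (by rw [walkArcs_length]; omega) (w2.trans w1.symm)
    have htail : L.tail.Nodup := by
      rw [List.nodup_iff_getElem?_ne_getElem?]
      intro i j hij hjlen he
      rw [List.length_tail, hLlen] at hjlen
      rw [List.getElem?_tail, List.getElem?_tail] at he
      obtain ⟨u, hu⟩ : ∃ u, L[i+1]? = some u :=
        ⟨_, List.getElem?_eq_getElem (by rw [hLlen]; omega)⟩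
      have hqu : L[j+1]? = some u := by rw [← he]; exact hu
      obtain ⟨ap, hap⟩ : ∃ z, L[i]? = some z :=
        ⟨_, List.getElem?_eq_getElem (by rw [hLlen]; omega)⟩
      obtain ⟨aq, haq⟩ : ∃ z, L[j]? = some z :=
        ⟨_, List.getElem?_eq_getElem (by rw [hLlen]; omega)⟩
      have hin_ne : ap ≠ aq := by
        intro e
        rw [← e] at haq
        exact LarcNe i j (by omega) (by omega) (by omega) ap u hap hu haq hqu
      have hinA_p : A ap u := chain'_iff_getElem?.1 hLchain i _ _ hap hu
      have hinA_q : A aq u := chain'_iff_getElem?.1 hLchain j _ _ haq hqu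
      have h2in : 2 ≤ {z : Fin n | A z u}.ncard :=
        two_le_ncard (Set.toFinite _) hinA_p hinA_q hin_ne
      obtain ⟨bp, hbp⟩ : ∃ z, L[i+1+1]? = some z :=
        ⟨_, List.getElem?_eq_getElem (by rw [hLlen]; omega)⟩
      have houtA_p : A u bp := chain'_iff_getElem?.1 hLchain (i+1) _ _ hu hbp
      have h2out : 2 ≤ {z : Fin n | A u z}.ncard := by
        rcases Nat.lt_or_ge (j+1) (l.length - 5) with hq | hq
        · obtain ⟨bq, hbq⟩ : ∃ z, L[j+1+1]? = some z :=
            ⟨_, List.getElem?_eq_getElem (by rw [hLlen]; omega)⟩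
          have houtA_q : A u bq := chain'_iff_getElem?.1 hLchain (j+1) _ _ hqu hbq
          have hout_ne : bp ≠ bq := by
            intro e
            rw [← e] at hbq
            exact LarcNe (i+1) (j+1) (by omega) (by omega) (by omega) u bp hu hbp hqu hbq
          exact two_le_ncard (Set.toFinite _) houtA_p houtA_q hout_ne
        · have hjN : j + 1 = l.length - 5 := by omega
          have hux : u = x₀ := by
            rw [hjN] at hqu
            exact Option.some_injective _ (hqu.symm.trans hLN)
          obtain ⟨b0, hb0⟩ : ∃ z, L[1]? = some z :=
            ⟨_, List.getElem?_eq_getElem (by rw [hLlen]; omega)⟩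
          have hL0u : L[0]? = some u := by rw [hux]; exact hL0
          have houtA_0 : A u b0 := chain'_iff_getElem?.1 hLchain 0 _ _ hL0u hb0
          have hout_ne : bp ≠ b0 := by
            intro e
            rw [← e] at hb0
            exact LarcNe (i+1) 0 (by omega) (by omega) (by omega) u bp hu hbp hL0u hb0
          exact two_le_ncard (Set.toFinite _) houtA_p houtA_0 hout_ne
      have hdeg3 := (hdeg u).2.2
      omega
    have hNn : l.length - 5 ≤ n := by
      have hcard := List.Nodup.length_le_card htail
      rw [List.length_tail, hLlen, Fintype.card_fin] at hcard
      omega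
    refine ⟨L, hLchain, ?_, ?_, htail⟩
    · rw [List.head?_eq_getElem?, List.getLast?_eq_getElem?, hLlen, hL0]
      have e : l.length - 4 - 1 = l.length - 5 := by omega
      rw [e, hLN]
    · rw [hLlen]; omega


end PaperRCA
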